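/- Let A be an n×n complex Hermitian matrix with eigenvalues a_1 ≥ a_2 ≥ … ≥ a_n (listed in decreasing order), and let k, p ≥ 1 with kp ≤ n. Then the rank-(kp) numerical range satisfies Λ_{kp}(A) = {t ∈ ℝ : a_{n+1−kp} ≤ t ≤ a_{kp}}. -/

import Mathlib

open Matrix

lemma exists_vanish {n m : ℕ} (V : Matrix (Fin n) (Fin m) ℂ) (hm : 1 ≤ m)
    (e : Fin (m - 1) → Fin n) :
    ∃ x : Fin m → ℂ, x ≠ 0 ∧ ∀ j, V.mulVec x (e j) = 0 := by
  set f : (Fin m → ℂ) →ₗ[ℂ] (Fin (m - 1) → ℂ) :=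
    (LinearMap.funLeft ℂ ℂ e).comp V.mulVecLin with hf
  have hni : ¬ Function.Injective f := by
    intro h
    have := LinearMap.finrank_le_finrank_of_injective h
    simp [Module.finrank_pi] at this
    omega
  rw [Function.not_injective_iff] at hni
  obtain ⟨x, y, hxy, hne⟩ := hni
  refine ⟨x - y, sub_ne_zero.mpr hne, fun j => ?_⟩
  have : f (x - y) = 0 := by rw [map_sub, hxy, sub_self]
  have := congrFun this j
  simpa [hf, LinearMap.funLeft, mulVecLin] using this

lemma quad1 {n m : ℕ} (V : Matrix (Fin n) (Fin m) ℂ) (hV : Vᴴ * V = 1)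
    (x : Fin m → ℂ) :
    star (V.mulVec x) ⬝ᵥ V.mulVec x = star x ⬝ᵥ x := by
  rw [star_mulVec, dotProduct_mulVec, vecMul_vecMul, hV, vecMul_one]

lemma quad2 {n m : ℕ} (d : Fin n → ℂ) (t : ℂ) (V : Matrix (Fin n) (Fin m) ℂ)
    (hD : Vᴴ * Matrix.diagonal d * V = t • 1) (x : Fin m → ℂ) :
    star (V.mulVec x) ⬝ᵥ (Matrix.diagonal d).mulVec (V.mulVec x)
      = t * (star x ⬝ᵥ x) := by
  rw [star_mulVec, mulVec_mulVec, dotProduct_mulVec, vecMul_vecMul,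
    ← Matrix.mul_assoc, hD]
  simp [Matrix.vecMul, dotProduct, Matrix.one_apply, Finset.mul_sum]
  ring_nf
  exact Finset.sum_congr rfl fun i _ => by ring

lemma dot_self_eq {n : ℕ} (w : Fin n → ℂ) :
    star w ⬝ᵥ w = ((∑ i, Complex.normSq (w i) : ℝ) : ℂ) := by
  push_cast
  simp [dotProduct, Complex.normSq_eq_conj_mul_self]

lemma dot_diag_eq {n : ℕ} (a : ℕ → ℝ) (w : Fin n → ℂ) :
    star w ⬝ᵥ (Matrix.diagonal (fun i : Fin n => ((a i : ℝ) : ℂ))).mulVec w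
      = ((∑ i : Fin n, a (i : ℕ) * Complex.normSq (w i) : ℝ) : ℂ) := by
  push_cast
  simp only [dotProduct, Matrix.mulVec_diagonal, Pi.star_apply, RCLike.star_def,
    Complex.normSq_eq_conj_mul_self]
  exact Finset.sum_congr rfl fun i _ => by ring

lemma sum_two_ite (n u v : ℕ) (hu : u < n) (x y : ℝ) (f : ℕ → ℝ) :
    ∑ i ∈ Finset.range n, (if i = u then x else 0) * f i * (if i = v then y else 0)
      = if u = v then x * f u * y else 0 := by
  have h : ∀ i ∈ Finset.range n,
      (if i = u then x else 0) * f i * (if i = v then y else 0)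
        = if i = u then (if u = v then x * f u * y else 0) else 0 := by
    intro i _
    by_cases h1 : i = u
    · subst h1; by_cases h2 : i = v <;> simp [h2]
    · simp [h1]
  rw [Finset.sum_congr rfl h, Finset.sum_ite_eq' (Finset.range n) u]
  simp [hu]

lemma diag_mem {n m : ℕ} (hm : 1 ≤ m) (hmn : m ≤ n)
    (a : ℕ → ℝ) (ha : Antitone a) (s : ℝ)
    (hs1 : a (n - m) ≤ s) (hs2 : s ≤ a (m - 1)) :
    ∃ W : Matrix (Fin n) (Fin m) ℂ, Wᴴ * W = 1 ∧
      Wᴴ * Matrix.diagonal (fun i : Fin n => ((a i : ℝ) : ℂ)) * W = (s : ℂ) • 1 := by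
  set P : ℕ → ℕ := fun j => if j < n - m then n - 1 - j else j with hP
  set q : ℕ → ℝ := fun j => (s - a (P j)) / (a j - a (P j)) with hq
  set c : ℕ → ℝ := fun j => Real.sqrt (q j) with hc
  set d : ℕ → ℝ := fun j => Real.sqrt (1 - q j) with hd
  -- basic index facts
  have hPlt : ∀ j : Fin m, P (j : ℕ) < n := by
    intro j; have := j.2; simp only [hP]; split <;> omega
  have hPge : ∀ j : Fin m, n - m ≤ P (j : ℕ) := by
    intro j; have := j.2; simp only [hP]; split <;> omega
  -- value facts
  have hβs : ∀ j : Fin m, a (P (j : ℕ)) ≤ s :=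
    fun j => le_trans (ha (hPge j)) hs1
  have hsα : ∀ j : Fin m, s ≤ a (j : ℕ) := by
    intro j
    exact le_trans hs2 (ha (by have := j.2; omega))
  have hq0 : ∀ j : Fin m, 0 ≤ q (j : ℕ) := by
    intro j
    exact div_nonneg (by linarith [hβs j, hsα j]) (by linarith [hβs j, hsα j])
  have hq1 : ∀ j : Fin m, q (j : ℕ) ≤ 1 := by
    intro j
    rcases lt_or_eq_of_le (le_trans (hβs j) (hsα j)) with h | h
    · rw [hq, div_le_one (by linarith)]; linarith [hsα j]
    · simp only [hq, ← h, sub_self, div_zero]; exact zero_le_one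
  have hc2 : ∀ j : Fin m, c (j : ℕ) ^ 2 = q (j : ℕ) :=
    fun j => Real.sq_sqrt (hq0 j)
  have hd2 : ∀ j : Fin m, d (j : ℕ) ^ 2 = 1 - q (j : ℕ) :=
    fun j => Real.sq_sqrt (by linarith [hq1 j])
  have hmix : ∀ j : Fin m,
      c (j : ℕ) ^ 2 * a (j : ℕ) + d (j : ℕ) ^ 2 * a (P (j : ℕ)) = s := by
    intro j
    rw [hc2 j, hd2 j]
    rcases lt_or_eq_of_le (le_trans (hβs j) (hsα j)) with h | h
    · have hne : a (j : ℕ) - a (P (j : ℕ)) ≠ 0 := by linarith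
      have : q (j : ℕ) * (a (j : ℕ) - a (P (j : ℕ))) = s - a (P (j : ℕ)) :=
        div_mul_cancel₀ _ hne
      nlinarith [this]
    · have hq0' : q (j : ℕ) = 0 := by simp only [hq, ← h, sub_self, div_zero]
      have hsβ : s = a (P (j : ℕ)) := le_antisymm (by rw [h]; exact hsα j) (hβs j)
      rw [hq0']; linarith
  have hdeg : ∀ j : Fin m, a (j : ℕ) = a (P (j : ℕ)) → c (j : ℕ) = 0 := by
    intro j h
    simp only [hc, hq, ← h, sub_self, div_zero, Real.sqrt_zero]
  -- disjointness
  have dis2 : ∀ j l : Fin m, (j : ℕ) ≠ (l : ℕ) → (j : ℕ) ≠ P (l : ℕ) := by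
    intro j l h; have := j.2; have := l.2; simp only [hP]; split <;> omega
  have dis3 : ∀ j l : Fin m, (j : ℕ) ≠ (l : ℕ) → P (j : ℕ) ≠ P (l : ℕ) := by
    intro j l h; have := j.2; have := l.2; simp only [hP]; split <;> split <;> omega
  -- the matrix
  set g : Fin n → Fin m → ℝ := fun i j =>
    (if (i : ℕ) = (j : ℕ) then c (j : ℕ) else 0)
      + (if (i : ℕ) = P (j : ℕ) then d (j : ℕ) else 0) with hg
  have main : ∀ (f : ℕ → ℝ) (j l : Fin m),
      ∑ i : Fin n, g i j * f (i : ℕ) * g i l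
        = (if (j : ℕ) = (l : ℕ) then c (j : ℕ) * f (j : ℕ) * c (l : ℕ) else 0)
          + (if (j : ℕ) = P (l : ℕ) then c (j : ℕ) * f (j : ℕ) * d (l : ℕ) else 0)
          + (if P (j : ℕ) = (l : ℕ) then d (j : ℕ) * f (P (j : ℕ)) * c (l : ℕ) else 0)
          + (if P (j : ℕ) = P (l : ℕ) then d (j : ℕ) * f (P (j : ℕ)) * d (l : ℕ) else 0) := by
    intro f j l
    have hstep : ∑ i : Fin n, g i j * f (i : ℕ) * g i l
        = ∑ i ∈ Finset.range n,
            ((if i = (j : ℕ) then c (j : ℕ) else 0) + (if i = P (j : ℕ) then d (j : ℕ) else 0))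
              * f i *
            ((if i = (l : ℕ) then c (l : ℕ) else 0) + (if i = P (l : ℕ) then d (l : ℕ) else 0)) := by
      simp only [hg]
      exact Fin.sum_univ_eq_sum_range (fun i =>
        ((if i = (j : ℕ) then c (j : ℕ) else 0) + (if i = P (j : ℕ) then d (j : ℕ) else 0))
          * f i *
        ((if i = (l : ℕ) then c (l : ℕ) else 0) + (if i = P (l : ℕ) then d (l : ℕ) else 0))) n
    have expand : ∀ i ∈ Finset.range n,
        ((if i = (j : ℕ) then c (j : ℕ) else 0) + (if i = P (j : ℕ) then d (j : ℕ) else 0))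
          * f i *
        ((if i = (l : ℕ) then c (l : ℕ) else 0) + (if i = P (l : ℕ) then d (l : ℕ) else 0))
        = (if i = (j : ℕ) then c (j : ℕ) else 0) * f i * (if i = (l : ℕ) then c (l : ℕ) else 0)
          + (if i = (j : ℕ) then c (j : ℕ) else 0) * f i * (if i = P (l : ℕ) then d (l : ℕ) else 0)
          + (if i = P (j : ℕ) then d (j : ℕ) else 0) * f i * (if i = (l : ℕ) then c (l : ℕ) else 0)
          + (if i = P (j : ℕ) then d (j : ℕ) else 0) * f i * (if i = P (l : ℕ) then d (l : ℕ) else 0) :=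
      fun i _ => by ring
    have hjn : (j : ℕ) < n := lt_of_lt_of_le j.2 hmn
    rw [hstep, Finset.sum_congr rfl expand, Finset.sum_add_distrib, Finset.sum_add_distrib,
      Finset.sum_add_distrib, sum_two_ite n _ _ hjn, sum_two_ite n _ _ hjn,
      sum_two_ite n _ _ (hPlt j), sum_two_ite n _ _ (hPlt j)]
  refine ⟨fun i j => ((g i j : ℝ) : ℂ), ?_, ?_⟩
  · ext j l
    erw [Matrix.mul_apply]
    have hterm : ∀ i : Fin n,
        (fun i j => ((g i j : ℝ) : ℂ))ᴴ j i * (fun i j => ((g i j : ℝ) : ℂ)) i l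
          = ((g i j * (fun _ : ℕ => (1 : ℝ)) (i : ℕ) * g i l : ℝ) : ℂ) := by
      intro i
      simp only [conjTranspose_apply, RCLike.star_def, Complex.conj_ofReal]
      erw [conjTranspose_apply]
      simp only [RCLike.star_def, Complex.conj_ofReal]
      push_cast
      ring
    rw [Finset.sum_congr rfl (fun i _ => hterm i), ← Complex.ofReal_sum,
      main (fun _ => (1 : ℝ)) j l]
    rcases eq_or_ne j l with rfl | hjl
    · rw [Matrix.one_apply_eq]
      by_cases hdg : (j : ℕ) = P (j : ℕ)
      · have hc0 : c (j : ℕ) = 0 := hdeg j (congrArg a hdg)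
        have hq0' : q (j : ℕ) = 0 := by
          have h := congrArg a hdg
          simp only [hq, ← h, sub_self, div_zero]
        simp only [hc0, zero_mul, mul_zero, if_pos rfl, ite_self, add_zero, zero_add,
          if_neg, reduceIte]
        have hd1 : d (j : ℕ) ^ 2 = 1 := by rw [hd2 j, hq0']; ring
        norm_cast
        linear_combination hd1
      · have h1 : (if (j : ℕ) = P (j : ℕ) then c (j : ℕ) * (1:ℝ) * d (j : ℕ) else 0) = 0 :=
          if_neg hdg
        have h2 : (if P (j : ℕ) = (j : ℕ) then d (j : ℕ) * (1:ℝ) * c (j : ℕ) else 0) = 0 :=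
          if_neg (Ne.symm hdg)
        rw [h1, h2, if_pos rfl, if_pos rfl]
        norm_cast
        linear_combination hc2 j + hd2 j
    · have hne : (j : ℕ) ≠ (l : ℕ) := fun h => hjl (Fin.ext h)
      rw [Matrix.one_apply_ne hjl]
      rw [if_neg hne, if_neg (dis2 j l hne), if_neg (Ne.symm (dis2 l j (Ne.symm hne))),
        if_neg (dis3 j l hne)]
      norm_num
  · ext j l
    erw [Matrix.mul_apply]
    have hterm : ∀ i : Fin n,
        ((fun i j => ((g i j : ℝ) : ℂ))ᴴ * Matrix.diagonal (fun i : Fin n => ((a i : ℝ) : ℂ))) j i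
            * (fun i j => ((g i j : ℝ) : ℂ)) i l
          = ((g i j * a (i : ℕ) * g i l : ℝ) : ℂ) := by
      intro i
      simp only [Matrix.mul_diagonal, conjTranspose_apply, RCLike.star_def, Complex.conj_ofReal]
      erw [conjTranspose_apply]
      simp only [RCLike.star_def, Complex.conj_ofReal]
      push_cast
      ring
    rw [Finset.sum_congr rfl (fun i _ => hterm i), ← Complex.ofReal_sum,
      main (fun i => a i) j l]
    rcases eq_or_ne j l with rfl | hjl
    · rw [Matrix.smul_apply, Matrix.one_apply_eq, smul_eq_mul, mul_one]
      by_cases hdg : (j : ℕ) = P (j : ℕ)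
      · have hc0 : c (j : ℕ) = 0 := hdeg j (congrArg a hdg)
        norm_cast
        rw [if_pos rfl, if_pos rfl]
        simp only [hc0, zero_mul, mul_zero, ite_self, add_zero, zero_add]
        linear_combination hmix j - (c (j : ℕ) * a (j : ℕ)) * hc0
      · have h1 : (if (j : ℕ) = P (j : ℕ) then c (j : ℕ) * a (j : ℕ) * d (j : ℕ) else 0) = 0 :=
          if_neg hdg
        have h2 : (if P (j : ℕ) = (j : ℕ) then d (j : ℕ) * a (P (j : ℕ)) * c (j : ℕ) else 0) = 0 :=
          if_neg (Ne.symm hdg)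
        rw [h1, h2, if_pos rfl, if_pos rfl]
        norm_cast
        linear_combination hmix j
    · have hne : (j : ℕ) ≠ (l : ℕ) := fun h => hjl (Fin.ext h)
      rw [Matrix.smul_apply, Matrix.one_apply_ne hjl, smul_eq_mul, mul_zero]
      rw [if_neg hne, if_neg (dis2 j l hne), if_neg (Ne.symm (dis2 l j (Ne.symm hne))),
        if_neg (dis3 j l hne)]
      norm_num

lemma diag_subset {n m : ℕ} (hm : 1 ≤ m) (hmn : m ≤ n)
    (a : ℕ → ℝ) (ha : Antitone a) (t : ℂ)
    (V : Matrix (Fin n) (Fin m) ℂ) (hV : Vᴴ * V = 1)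
    (hD : Vᴴ * Matrix.diagonal (fun i : Fin n => ((a i : ℝ) : ℂ)) * V = t • 1) :
    ∃ s : ℝ, t = s ∧ a (n - m) ≤ s ∧ s ≤ a (m - 1) := by
  have key : ∀ (e : Fin (m-1) → Fin n), ∃ (w : Fin n → ℂ),
      (∀ j, w (e j) = 0) ∧ 0 < ∑ i, Complex.normSq (w i) ∧
      t * (∑ i, Complex.normSq (w i) : ℝ)
        = ((∑ i : Fin n, a (i : ℕ) * Complex.normSq (w i) : ℝ) : ℂ) := by
    intro e
    obtain ⟨x, hx0, hxv⟩ := exists_vanish V hm e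
    refine ⟨V.mulVec x, hxv, ?_, ?_⟩
    · have h1 : ((∑ i, Complex.normSq (V.mulVec x i) : ℝ) : ℂ)
          = ((∑ i, Complex.normSq (x i) : ℝ) : ℂ) := by
        rw [← dot_self_eq, ← dot_self_eq, quad1 V hV x]
      rw [Complex.ofReal_inj] at h1
      rw [h1]
      obtain ⟨i, hi⟩ := Function.ne_iff.mp hx0
      exact Finset.sum_pos' (fun j _ => Complex.normSq_nonneg _)
        ⟨i, Finset.mem_univ i, Complex.normSq_pos.mpr hi⟩
    · rw [← dot_diag_eq, quad2 _ t V hD x, ← dot_self_eq, quad1 V hV x]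
  obtain ⟨w, hwv, hwS, hwR⟩ := key (fun j => ⟨(j : ℕ), by omega⟩)
  obtain ⟨w', hwv', hwS', hwR'⟩ := key (fun j => ⟨n - m + 1 + (j : ℕ), by omega⟩)
  set S := ∑ i, Complex.normSq (w i)
  set R := ∑ i : Fin n, a (i : ℕ) * Complex.normSq (w i)
  set S' := ∑ i, Complex.normSq (w' i)
  set R' := ∑ i : Fin n, a (i : ℕ) * Complex.normSq (w' i)
  have hT : t = ((R / S : ℝ) : ℂ) := by
    push_cast
    rw [eq_div_iff (by exact_mod_cast ne_of_gt hwS : (S : ℂ) ≠ 0)]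
    exact hwR
  have hT' : t = ((R' / S' : ℝ) : ℂ) := by
    push_cast
    rw [eq_div_iff (by exact_mod_cast ne_of_gt hwS' : (S' : ℂ) ≠ 0)]
    exact hwR'
  have hEq : R / S = R' / S' := by
    have := hT.symm.trans hT'
    exact_mod_cast this
  refine ⟨R / S, hT, ?_, ?_⟩
  · rw [hEq, le_div_iff₀ hwS']
    calc a (n - m) * S' = ∑ i : Fin n, a (n - m) * Complex.normSq (w' i) := by
          rw [Finset.mul_sum]
      _ ≤ R' := by
          refine Finset.sum_le_sum fun i _ => ?_
          by_cases hi : n - m < (i : ℕ)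
          · have h0 : w' i = 0 := by
              have := hwv' ⟨(i : ℕ) - (n - m + 1), by omega⟩
              have he : (⟨n - m + 1 + ((i : ℕ) - (n - m + 1)), by omega⟩ : Fin n) = i :=
                Fin.ext (by simp; omega)
              rwa [he] at this
            simp [h0]
          · exact mul_le_mul_of_nonneg_right (ha (by omega)) (Complex.normSq_nonneg _)
  · rw [div_le_iff₀ hwS]
    calc R ≤ ∑ i : Fin n, a (m - 1) * Complex.normSq (w i) := by
          refine Finset.sum_le_sum fun i _ => ?_
          by_cases hi : (i : ℕ) < m - 1
          · have h0 : w i = 0 := by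
              have := hwv ⟨(i : ℕ), by omega⟩
              have he : (⟨(i : ℕ), by omega⟩ : Fin n) = i := Fin.ext rfl
              rwa [he] at this
            simp [h0]
          · exact mul_le_mul_of_nonneg_right (ha (by omega)) (Complex.normSq_nonneg _)
      _ = a (m - 1) * S := by rw [Finset.mul_sum]



/-- Proposition 4.1, first part: Let `A` be an `n × n` Hermitian matrix
with eigenvalues `a_1 ≥ a_2 ≥ … ≥ a_n` (encoded by an antitone `a : ℕ → ℝ`, 0-indexed, and
a unitary `U` with `A = U diag(a_0,…,a_{n-1}) U*`), and let `k, p ≥ 1` with `kp ≤ n`. Then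
the rank-`kp` numerical range is `Λ_{kp}(A) = {t ∈ ℝ : a_{n+1-kp} ≤ t ≤ a_{kp}}`
(in 0-indexed form, `a (n - kp) ≤ t ≤ a (kp - 1)`). -/
theorem stmt11 (n k p : ℕ) (hk : 1 ≤ k) (hp : 1 ≤ p) (hkp : k * p ≤ n)
    (A : Matrix (Fin n) (Fin n) ℂ) (hA : A.IsHermitian)
    (a : ℕ → ℝ) (ha : Antitone a)
    (U : Matrix (Fin n) (Fin n) ℂ) (hU : Uᴴ * U = 1 ∧ U * Uᴴ = 1)
    (hAa : A = U * Matrix.diagonal (fun i : Fin n => ((a i : ℝ) : ℂ)) * Uᴴ) :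
    {t : ℂ | ∃ V : Matrix (Fin n) (Fin (k * p)) ℂ, Vᴴ * V = 1 ∧ Vᴴ * A * V = t • 1}
      = {t : ℂ | ∃ s : ℝ, t = (s : ℂ) ∧ a (n - k * p) ≤ s ∧ s ≤ a (k * p - 1)} := by
  have hm : 1 ≤ k * p := Nat.one_le_iff_ne_zero.mpr (by positivity)
  have hcan1 : ∀ X : Matrix (Fin n) (Fin (k * p)) ℂ, Uᴴ * (U * X) = X := fun X => by
    rw [← Matrix.mul_assoc, hU.1, Matrix.one_mul]
  have hcan2 : ∀ X : Matrix (Fin n) (Fin (k * p)) ℂ, U * (Uᴴ * X) = X := fun X => by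
    rw [← Matrix.mul_assoc, hU.2, Matrix.one_mul]
  ext t
  simp only [Set.mem_setOf_eq]
  constructor
  · rintro ⟨V, hV1, hV2⟩
    have hV1' : (Uᴴ * V)ᴴ * (Uᴴ * V) = 1 := by
      simp only [conjTranspose_mul, conjTranspose_conjTranspose, Matrix.mul_assoc, hcan2]
      exact hV1
    have hV2' : (Uᴴ * V)ᴴ * Matrix.diagonal (fun i : Fin n => ((a i : ℝ) : ℂ)) * (Uᴴ * V)
        = t • 1 := by
      rw [hAa] at hV2
      rw [← hV2]
      simp only [conjTranspose_mul, conjTranspose_conjTranspose, Matrix.mul_assoc]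
    exact diag_subset hm hkp a ha t (Uᴴ * V) hV1' hV2'
  · rintro ⟨s, rfl, hs1, hs2⟩
    obtain ⟨W, hW1, hW2⟩ := diag_mem hm hkp a ha s hs1 hs2
    refine ⟨U * W, ?_, ?_⟩
    · simp only [conjTranspose_mul, Matrix.mul_assoc, hcan1]
      exact hW1
    · rw [hAa, ← hW2]
      simp only [conjTranspose_mul, Matrix.mul_assoc, hcan1]
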